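/- Let n be a natural number, let P be a finite type with Fintype.card P = n (the tiles of the board) and let D be a type with exactly 4 elements (the laser directions), so the laser state space S = P × D has cardinality 4n. Let f : S → Option S be any partial function that is injective where defined (whenever f a = some c and f b = some c, then a = b). If the initial laser state s is not in the image of f, then the trajectory of s under f terminates within at most 4n steps: there exists k ≤ 4 * n such that iterating the partial dynamics k times starting from s yields none. -/

import Mathlib

/-- Quantitative form of Lemma 1: on a board with `n` tiles and 4 laser
directions, a time-reversible laser dynamics started from a state with no
predecessor terminates within `4 * n` steps. -/
theorem lasertank_laser_terminates_4n (n : ℕ) (P D : Type*) [Fintype P] [Fintype D]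
    (hP : Fintype.card P = n) (hD : Fintype.card D = 4)
    (f : P × D → Option (P × D))
    (hinj : ∀ a b c : P × D, f a = some c → f b = some c → a = b)
    (s : P × D) (hs : ∀ a : P × D, f a ≠ some s) :
    ∃ k ≤ 4 * n, (fun o : Option (P × D) => o.bind f)^[k] (some s) = none := by
  set g : ℕ → Option (P × D) := fun k => (fun o : Option (P × D) => o.bind f)^[k] (some s)
    with hg
  have hsucc : ∀ k, g (k + 1) = (g k).bind f := by
    intro k
    simp only [hg, Function.iterate_succ_apply']
  -- key: no repeats among defined states
  have key : ∀ i j x, i < j → g i = some x → g j = some x → False := by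
    intro i
    induction i with
    | zero =>
      intro j x hij hi hj
      have hx : x = s := by simpa [hg] using hi.symm
      subst hx
      obtain ⟨j', rfl⟩ := Nat.exists_eq_add_of_lt hij
      rw [Nat.zero_add, hsucc] at hj
      rcases Option.bind_eq_some_iff.mp hj with ⟨a, _, hfa⟩
      exact hs a hfa
    | succ i ih =>
      intro j x hij hi hj
      obtain ⟨j', rfl⟩ := Nat.exists_eq_add_of_lt hij
      rw [hsucc] at hi
      rw [show i + 1 + j' + 1 = (i + 1 + j') + 1 from rfl, hsucc] at hj
      rcases Option.bind_eq_some_iff.mp hi with ⟨a, ha, hfa⟩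
      rcases Option.bind_eq_some_iff.mp hj with ⟨b, hb, hfb⟩
      have : a = b := hinj a b x hfa hfb
      subst this
      exact ih (i + 1 + j') a (by omega) ha hb
  by_contra hcon
  push_neg at hcon
  have hne : ∀ k : Fin (4 * n + 1), (g k.val).isSome := by
    intro k
    rcases hk : g k.val with _ | x
    · exact absurd hk (hcon k.val (by omega))
    · rfl
  have hinj' : Function.Injective (fun k : Fin (4 * n + 1) => (g k.val).get (hne k)) := by
    intro i j hij
    simp only at hij
    have ei : g i.val = some ((g i.val).get (hne i)) := (Option.some_get (hne i)).symm
    have ej : g j.val = some ((g i.val).get (hne i)) := by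
      rw [hij]; exact (Option.some_get (hne j)).symm
    by_contra hne'
    rcases Ne.lt_or_gt (fun h : (i : ℕ) = j => hne' (Fin.ext h)) with h | h
    · exact absurd (key i j _ h ei ej) not_false
    · exact absurd (key j i _ h ej ei) not_false
  have hcard := Fintype.card_le_of_injective _ hinj'
  simp [Fintype.card_prod, hP, hD] at hcard
  omega
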